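/- Let k be a field of characteristic zero, let R be a finitely generated commutative k-algebra, and let δ be a nonzero k-linear derivation of R. Then the intersection of all δ-invariant maximal ideals of R is a nonzero ideal; more precisely, if y ∈ R satisfies δ(y) ≠ 0, then δ(y) lies in every δ-invariant maximal ideal of R. -/

import Mathlib

open Polynomial

/-- Key step: if `P` is a `δ`-invariant maximal ideal of a finitely generated
`k`-algebra `R` over a characteristic-zero field `k`, then `δ y ∈ P` for all `y`. -/
theorem deriv_mem_of_invariant_maximal
    (k R : Type*) [Field k] [CharZero k] [CommRing R] [Algebra k R]
    [Algebra.FiniteType k R]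
    (δ : Derivation k R R) (y : R)
    (P : Ideal R) (hP : P.IsMaximal) (hinv : ∀ x ∈ P, δ x ∈ P) : δ y ∈ P := by
  haveI := hP
  let K := R ⧸ P
  letI : Field K := Ideal.Quotient.field P
  haveI : Algebra.FiniteType k K :=
    Algebra.FiniteType.of_surjective
      (Ideal.Quotient.mkₐ k P) (Ideal.Quotient.mkₐ_surjective k P)
  haveI : Module.Finite k K := finite_of_finite_type_of_isJacobsonRing k K
  set π : R →ₐ[k] K := Ideal.Quotient.mkₐ k P with hπ
  have hx : IsIntegral k (π y) := IsIntegral.of_finite k (π y)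
  set p : k[X] := minpoly k (π y) with hp
  have hp0 : p ≠ 0 := minpoly.ne_zero hx
  have hdeg : 0 < p.natDegree := minpoly.natDegree_pos hx
  -- aeval y p ∈ P
  have hmem : aeval y p ∈ P := by
    have h0 : π (aeval y p) = 0 := by
      rw [← aeval_algHom_apply, minpoly.aeval]
    exact Ideal.Quotient.eq_zero_iff_mem.mp h0
  have hδmem : δ (aeval y p) ∈ P := hinv _ hmem
  have hkey : aeval (π y) (derivative p) * π (δ y) = 0 := by
    have := Derivation.map_aeval δ p y
    have h2 : π (aeval y (derivative p) * δ y) = 0 := by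
      rw [← smul_eq_mul, ← this]
      exact Ideal.Quotient.eq_zero_iff_mem.mpr hδmem
    rw [map_mul, ← aeval_algHom_apply] at h2
    exact h2
  have hd0 : aeval (π y) (derivative p) ≠ 0 := by
    intro h
    have hderiv_ne : derivative p ≠ 0 := by
      intro hc
      have := natDegree_eq_zero_of_derivative_eq_zero hc
      omega
    have := minpoly.degree_le_of_ne_zero k (π y) hderiv_ne h
    exact absurd this (not_le_of_gt (degree_derivative_lt hp0))
  have : π (δ y) = 0 := by
    rcases mul_eq_zero.mp hkey with h | h
    · exact absurd h hd0
    · exact h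
  exact Ideal.Quotient.eq_zero_iff_mem.mp this

/-- Let `k` be a field of characteristic zero, `R` a finitely generated commutative
`k`-algebra, and `δ` a nonzero `k`-linear derivation of `R`.  Then the intersection
of all `δ`-invariant maximal ideals of `R` is a nonzero ideal (by convention the
unit ideal if there are no such maximal ideals); more precisely, if `δ(y) ≠ 0`
then `δ(y)` lies in every `δ`-invariant maximal ideal of `R`. -/
theorem inf_invariant_maximal_ideals_ne_bot
    (k R : Type*) [Field k] [CharZero k] [CommRing R] [Algebra k R]
    [Algebra.FiniteType k R]
    (δ : Derivation k R R) (hδ : δ ≠ 0) :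
    sInf {P : Ideal R | P.IsMaximal ∧ ∀ x ∈ P, δ x ∈ P} ≠ ⊥ ∧
      ∀ y : R, δ y ≠ 0 →
        ∀ P : Ideal R, P.IsMaximal → (∀ x ∈ P, δ x ∈ P) → δ y ∈ P := by
  obtain ⟨y, hy⟩ : ∃ y, δ y ≠ 0 := by
    by_contra h
    push_neg at h
    exact hδ (by ext x; simp [h x])
  refine ⟨?_, fun y' _ P hP hinv => deriv_mem_of_invariant_maximal k R δ y' P hP hinv⟩
  intro hbot
  have : δ y ∈ sInf {P : Ideal R | P.IsMaximal ∧ ∀ x ∈ P, δ x ∈ P} := by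
    rw [Ideal.mem_sInf]
    rintro P ⟨hP, hinv⟩
    exact deriv_mem_of_invariant_maximal k R δ y P hP hinv
  rw [hbot] at this
  exact hy (Ideal.mem_bot.mp this)
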